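/- If g ≥ 2 and λ_1, ..., λ_g are distinct real numbers with positive integer multiplicities m_1, ..., m_g satisfying Cartan's formula with c = 0 (i.e., for each i, Σ_{j≠i} m_j (λ_i λ_j)/(λ_i - λ_j) = 0), then g ≤ 2. -/
import Mathlib

open Finset

lemma cartan_aux (g : ℕ) (hg3 : 3 ≤ g)
    (lam : Fin g → ℝ) (m : Fin g → ℕ)
    (hlam : Function.Injective lam) (hm : ∀ i, 0 < m i)
    (hcartan : ∀ i : Fin g,
      ∑ j ∈ univ.erase i, (m j : ℝ) * (lam i * lam j) / (lam i - lam j) = 0)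
    (hpos : ∃ i, 0 < lam i) : False := by
  classical
  obtain ⟨i0, hi0⟩ := hpos
  set S : Finset (Fin g) := univ.filter (fun i => 0 < lam i) with hS
  have hSne : S.Nonempty := ⟨i0, by simp [hS, hi0]⟩
  obtain ⟨i, hiS, hmin⟩ := S.exists_min_image lam hSne
  have hipos : 0 < lam i := by
    have := hiS; simp [hS] at this; exact this
  have key : ∀ j, j ≠ i →
      (m j : ℝ) * (lam i * lam j) / (lam i - lam j) ≤ 0 ∧
      (lam j ≠ 0 → (m j : ℝ) * (lam i * lam j) / (lam i - lam j) < 0) := by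
    intro j hji
    have hmj : (0:ℝ) < m j := by exact_mod_cast hm j
    rcases lt_trichotomy (lam j) 0 with h | h | h
    · have hnum : (m j : ℝ) * (lam i * lam j) < 0 := by nlinarith [mul_pos hmj (mul_pos hipos (neg_pos.mpr h))]
      have hden : 0 < lam i - lam j := by linarith
      have := div_neg_of_neg_of_pos hnum hden
      exact ⟨le_of_lt this, fun _ => this⟩
    · simp [h]
    · have hjS : j ∈ S := by simp [hS, h]
      have hlt : lam i < lam j :=
        lt_of_le_of_ne (hmin j hjS) (fun e => hji (hlam e.symm))
      have hnum : 0 < (m j : ℝ) * (lam i * lam j) := by nlinarith [mul_pos hmj (mul_pos hipos h)]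
      have hden : lam i - lam j < 0 := by linarith
      have := div_neg_of_pos_of_neg hnum hden
      exact ⟨le_of_lt this, fun _ => this⟩
  have hexists : ∃ j ∈ univ.erase i,
      (m j : ℝ) * (lam i * lam j) / (lam i - lam j) < 0 := by
    have hcard : 1 < (univ.erase i : Finset (Fin g)).card := by
      rw [card_erase_of_mem (mem_univ i), card_univ, Fintype.card_fin]; omega
    obtain ⟨a, ha, b, hb, hab⟩ := one_lt_card.mp hcard
    have hone : lam a ≠ 0 ∨ lam b ≠ 0 := by
      by_contra h; push_neg at h
      exact hab (hlam (h.1.trans h.2.symm))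
    obtain ⟨j, hj, hjne⟩ : ∃ j ∈ univ.erase i, lam j ≠ 0 := by
      rcases hone with h | h
      exacts [⟨a, ha, h⟩, ⟨b, hb, h⟩]
    exact ⟨j, hj, (key j (mem_erase.mp hj).1).2 hjne⟩
  have hlt : (∑ j ∈ univ.erase i, (m j : ℝ) * (lam i * lam j) / (lam i - lam j))
      < ∑ _j ∈ univ.erase i, (0:ℝ) :=
    Finset.sum_lt_sum (fun j hj => (key j (mem_erase.mp hj).1).1) hexists
  rw [Finset.sum_const_zero] at hlt
  linarith [hcartan i]

/-- Cartan's formula with `c = 0` (Euclidean case) forces at most two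
distinct principal curvatures. -/
theorem cartan_formula_euclidean_g_le_two (g : ℕ) (hg : 2 ≤ g)
    (lam : Fin g → ℝ) (m : Fin g → ℕ)
    (hlam : Function.Injective lam) (hm : ∀ i, 0 < m i)
    (hcartan : ∀ i : Fin g,
      ∑ j ∈ univ.erase i, (m j : ℝ) * (lam i * lam j) / (lam i - lam j) = 0) :
    g ≤ 2 := by
  by_contra hgt
  push_neg at hgt
  have hg3 : 3 ≤ g := hgt
  by_cases hpos : ∃ i, 0 < lam i
  · exact cartan_aux g hg3 lam m hlam hm hcartan hpos
  · push_neg at hpos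
    -- all lam i ≤ 0; negate
    have hlam' : Function.Injective (fun i => -lam i) :=
      fun a b h => hlam (neg_injective h)
    have hcartan' : ∀ i : Fin g,
        ∑ j ∈ univ.erase i,
          (m j : ℝ) * ((-lam i) * (-lam j)) / ((-lam i) - (-lam j)) = 0 := by
      intro i
      have heq : ∀ j ∈ univ.erase i,
          (m j : ℝ) * ((-lam i) * (-lam j)) / ((-lam i) - (-lam j)) =
          -((m j : ℝ) * (lam i * lam j) / (lam i - lam j)) := by
        intro j _
        rw [neg_mul_neg, show (-lam i) - (-lam j) = -(lam i - lam j) by ring,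
          div_neg]
      rw [Finset.sum_congr rfl heq, Finset.sum_neg_distrib, hcartan i, neg_zero]
    have hneg : ∃ i, 0 < -lam i := by
      set a : Fin g := ⟨0, by omega⟩
      set b : Fin g := ⟨1, by omega⟩
      have h0 : a ≠ b := by
        intro h
        exact absurd (congrArg Fin.val h) (by simp [a, b])
      rcases lt_or_eq_of_le (hpos a) with h | h
      · exact ⟨a, by linarith⟩
      · rcases lt_or_eq_of_le (hpos b) with h1 | h1
        · exact ⟨b, by linarith⟩
        · exact absurd (hlam (h.trans h1.symm)) h0
    exact cartan_aux g hg3 (fun i => -lam i) m hlam' hm hcartan' hneg
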